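/- (Duality formula for the generalized Moreau–Yosida approximation.) Assume the energy functional E satisfies condition (E1). Let ψ : [0,∞) → [0,∞) be convex, lower semicontinuous, with ψ(0) = 0 and ψ(r)/r → ∞ as r → ∞, and let ψ*(s) := sup_{r≥0} (s·r − ψ(r)) be its conjugate. Define the generalized Moreau–Yosida approximation Y_τ^ψ(E)(t,u) := inf_{v∈X} [ τ·ψ(d(u,v)/τ) + E(t,v) ] for τ > 0. Then for every (t,u) ∈ [0,T] × X: ψ*(|DE|(t,u)) = limsup_{τ↓0} (E(t,u) − Y_τ^ψ(E)(t,u))/τ. -/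

import Mathlib

open Filter MeasureTheory Topology Set
open scoped ENNReal

noncomputable section

variable {X : Type*} [MetricSpace X]

/-- Pointwise total variation of `u : ℝ → X` on a set `S ⊆ ℝ` (with value in `ℝ≥0∞`),
defined as the supremum over finite increasing families of points of `S` of the sums of the
consecutive distances. -/
def varD (u : ℝ → X) (S : Set ℝ) : ℝ≥0∞ :=
  ⨆ (M : ℕ) (t : ℕ → ℝ)
    (_ : (∀ j, j ≤ M → t j ∈ S) ∧ ∀ j, j < M → t j < t (j + 1)),
    ∑ j ∈ Finset.range M, edist (u (t j)) (u (t (j + 1)))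

/-- Left limit of `u` at `t`, with the convention that it equals `u 0` for `t ≤ 0`
(curves are thought of as being defined on `[0,T]`). -/
def lLim (u : ℝ → X) (t : ℝ) : X :=
  if t ≤ 0 then u 0 else Function.leftLim u t

/-- Right limit of `u : [0,T] → X` at `t`, with the convention that it equals `u T` for
`t ≥ T`. -/
def rLim (u : ℝ → X) (T t : ℝ) : X :=
  if T ≤ t then u T else Function.rightLim u t

/-- The jump set of a curve `u : [0,T] → X`. -/
def jumpSet (u : ℝ → X) (T : ℝ) : Set ℝ :=
  {t | t ∈ Icc 0 T ∧ (lLim u t ≠ u t ∨ rLim u T t ≠ u t)}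

/-- The metric slope `|DE|(t,u)` of the energy functional `E`. -/
def slopeE (E : ℝ → X → ℝ) (t : ℝ) (u : X) : ℝ≥0∞ :=
  Filter.limsup (fun v => ENNReal.ofReal ((E t u - E t v) / dist u v)) (𝓝[≠] u)

/-- The metric derivative of a curve `θ : ℝ → X` (via `limUnder`: it coincides with the
metric derivative at every point where the latter exists). -/
def mder (θ : ℝ → X) (r : ℝ) : ℝ :=
  limUnder (𝓝[≠] r) fun s => dist (θ s) (θ r) / |s - r|

/-- `θ` is absolutely continuous on `[a,b]`. -/
def IsAC (θ : ℝ → X) (a b : ℝ) : Prop :=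
  ∃ m : ℝ → ℝ, IntegrableOn m (Icc a b) ∧
    ∀ s t : ℝ, a ≤ s → s ≤ t → t ≤ b → dist (θ s) (θ t) ≤ ∫ r in s..t, m r

/-- The viscous jump dissipation cost `v(t,u₋,u₊)`. -/
def vCost (E : ℝ → X → ℝ) (t : ℝ) (um up : X) : ℝ≥0∞ :=
  ⨅ (r₀ : ℝ) (r₁ : ℝ) (θ : ℝ → X)
    (_ : r₀ ≤ r₁ ∧ IsAC θ r₀ r₁ ∧ θ r₀ = um ∧ θ r₁ = up),
    ∫⁻ r in Ioc r₀ r₁, ENNReal.ofReal (mder θ r) * max (slopeE E t (θ r)) 1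

/-- The viscously corrected distance `D_μ(x,y) = d(x,y) + (μ/2) d(x,y)²`. -/
def Dmu (μ : ℝ) (x y : X) : ℝ := dist x y + μ / 2 * dist x y ^ 2

/-- The residual stability function `R_μ(t,x) = sup_y (E(t,x) − E(t,y) − D_μ(x,y))`. -/
def Rmu (E : ℝ → X → ℝ) (μ t : ℝ) (x : X) : ℝ≥0∞ :=
  ⨆ y : X, ENNReal.ofReal (E t x - E t y - Dmu μ x y)

/-- The holes of a compact set `K ⊆ ℝ` (connected components of `[inf K, sup K] ∖ K`),
identified with the pairs of their endpoints. -/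
def holes (K : Set ℝ) : Set (ℝ × ℝ) :=
  {p | p.1 ∈ K ∧ p.2 ∈ K ∧ p.1 < p.2 ∧ Ioo p.1 p.2 ∩ K = ∅}

/-- The visco-energetic transition cost `Trc_μ(t,θ,K)`. -/
def trCost (E : ℝ → X → ℝ) (μ t : ℝ) (θ : ℝ → X) (K : Set ℝ) : ℝ≥0∞ :=
  varD θ K
    + (∑' p : ↥(holes K),
        ENNReal.ofReal (μ / 2 * dist (θ (p : ℝ × ℝ).1) (θ (p : ℝ × ℝ).2) ^ 2))
    + ∑' s : ↥(K \ {sSup K}), Rmu E μ t (θ (s : ℝ))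

/-- The visco-energetic jump dissipation cost `c_μ(t,u₋,u₊)`. -/
def veCost (E : ℝ → X → ℝ) (μ : ℝ) (t : ℝ) (um up : X) : ℝ≥0∞ :=
  ⨅ (K : Set ℝ) (θ : ℝ → X)
    (_ : K.Nonempty ∧ IsCompact K ∧ ContinuousOn θ K ∧ θ (sInf K) = um ∧ θ (sSup K) = up),
    trCost E μ t θ K

/-- The jump contribution `Jmp_{Δ_e}(u;[t₀,t₁])` of the incremental cost associated with a
jump dissipation cost `e`. -/
def jmpVar (e : ℝ → X → X → ℝ≥0∞) (u : ℝ → X) (T t₀ t₁ : ℝ) : ℝ≥0∞ :=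
  (e t₀ (u t₀) (rLim u T t₀) - edist (u t₀) (rLim u T t₀))
    + (e t₁ (lLim u t₁) (u t₁) - edist (lLim u t₁) (u t₁))
    + ∑' t : ↥(jumpSet u T ∩ Ioo t₀ t₁),
        ((e (t : ℝ) (lLim u (t : ℝ)) (u (t : ℝ)) - edist (lLim u (t : ℝ)) (u (t : ℝ)))
          + (e (t : ℝ) (u (t : ℝ)) (rLim u T (t : ℝ))
              - edist (u (t : ℝ)) (rLim u T (t : ℝ))))

/-- The augmented total variation `Var_{d,e}(u;[t₀,t₁])`. -/
def varAug (e : ℝ → X → X → ℝ≥0∞) (u : ℝ → X) (T t₀ t₁ : ℝ) : ℝ≥0∞ :=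
  varD u (Icc t₀ t₁) + jmpVar e u T t₀ t₁

/-- Condition (E1): lower semicontinuity and compactness of the sublevel sets of the
perturbed functional `F(t,u) = E(t,u) + d(x₀,u)` on `[0,T] × X`. -/
def CondE1 (E : ℝ → X → ℝ) (T : ℝ) (x₀ : X) : Prop :=
  ∀ C : ℝ,
    LowerSemicontinuousOn (fun p : ℝ × X => E p.1 p.2)
      {p : ℝ × X | p.1 ∈ Icc 0 T ∧ E p.1 p.2 + dist x₀ p.2 ≤ C} ∧
    IsCompact {p : ℝ × X | p.1 ∈ Icc 0 T ∧ E p.1 p.2 + dist x₀ p.2 ≤ C}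

/-- Condition (E2): power control for the power functional `P`, with constant `CP`. -/
def CondE2 (E P : ℝ → X → ℝ) (T : ℝ) (x₀ : X) (CP : ℝ) : Prop :=
  0 < CP ∧
    ∀ t ∈ Icc (0 : ℝ) T, ∀ u : X,
      (P t u : EReal) ≤
          Filter.liminf (fun s => (((E t u - E s u) / (t - s) : ℝ) : EReal)) (𝓝[Ico 0 t] t) ∧
        Filter.limsup (fun s => (((E s u - E t u) / (s - t) : ℝ) : EReal)) (𝓝[Ioc t T] t) ≤
          (P t u : EReal) ∧
        |P t u| ≤ CP * (E t u + dist x₀ u)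

/-- Condition (E3): conditional upper semicontinuity of the power. -/
def CondE3 (E P : ℝ → X → ℝ) (T : ℝ) : Prop :=
  ∀ (tn : ℕ → ℝ) (un : ℕ → X) (t : ℝ) (u : X),
    (∀ n, tn n ∈ Icc (0 : ℝ) T) → t ∈ Icc (0 : ℝ) T →
    Tendsto tn atTop (𝓝 t) → Tendsto un atTop (𝓝 u) →
    Tendsto (fun n => E (tn n) (un n)) atTop (𝓝 (E t u)) →
    Filter.limsup (fun n => ((P (tn n) (un n) : ℝ) : EReal)) atTop ≤ (P t u : EReal)

/-- Condition (E3'): upper semicontinuity of the power and lower semicontinuity of the slope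
along sequences with bounded energy and slope. -/
def CondE3' (E P : ℝ → X → ℝ) (T : ℝ) (x₀ : X) : Prop :=
  ∀ (tn : ℕ → ℝ) (un : ℕ → X) (t : ℝ) (u : X),
    (∀ n, tn n ∈ Icc (0 : ℝ) T) → t ∈ Icc (0 : ℝ) T →
    Tendsto tn atTop (𝓝 t) → Tendsto un atTop (𝓝 u) →
    (∃ C : ℝ, ∀ n, E 0 (un n) + dist x₀ (un n) ≤ C) →
    (∃ S : ℝ≥0∞, S ≠ ⊤ ∧ ∀ n, slopeE E (tn n) (un n) ≤ S) →
    slopeE E t u ≤ Filter.liminf (fun n => slopeE E (tn n) (un n)) atTop ∧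
      Filter.limsup (fun n => ((P (tn n) (un n) : ℝ) : EReal)) atTop ≤ (P t u : EReal)

/-- Condition (E4): the chain-rule inequality. -/
def CondE4 (E P : ℝ → X → ℝ) (T : ℝ) : Prop :=
  ∀ u : ℝ → X, IsAC u 0 T →
    IsAC (fun t => E t (u t)) 0 T ∧
      ∀ᵐ t ∂(volume.restrict (Ioo (0 : ℝ) T)),
        DifferentiableAt ℝ (fun s => E s (u s)) t ∧
          ENNReal.ofReal (P t (u t) - deriv (fun s => E s (u s)) t) ≤
            ENNReal.ofReal (mder u t) * slopeE E t (u t)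

/-- Energetic solution of the rate-independent system `(X,E,d)`. -/
def IsEnergeticSol (E P : ℝ → X → ℝ) (T : ℝ) (u : ℝ → X) : Prop :=
  varD u (Icc 0 T) ≠ ⊤ ∧
    ∀ t ∈ Icc (0 : ℝ) T,
      (∀ v : X, E t (u t) ≤ E t v + dist (u t) v) ∧
        E t (u t) + (varD u (Icc 0 t)).toReal =
          E 0 (u 0) + ∫ s in (0 : ℝ)..t, P s (u s)

/-- Balanced Viscosity solution of the rate-independent system `(X,E,d)`. -/
def IsBVSol (E P : ℝ → X → ℝ) (T : ℝ) (u : ℝ → X) : Prop :=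
  varD u (Icc 0 T) ≠ ⊤ ∧
    (∀ t ∈ Icc (0 : ℝ) T \ jumpSet u T, slopeE E t (u t) ≤ 1) ∧
    ∀ t ∈ Icc (0 : ℝ) T,
      varAug (vCost E) u T 0 t ≠ ⊤ ∧
        E t (u t) + (varAug (vCost E) u T 0 t).toReal =
          E 0 (u 0) + ∫ s in (0 : ℝ)..t, P s (u s)

/-- μ-Visco-Energetic solution of the rate-independent system `(X,E,d)`. -/
def IsVESol (E P : ℝ → X → ℝ) (T μ : ℝ) (u : ℝ → X) : Prop :=
  varD u (Icc 0 T) ≠ ⊤ ∧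
    (∀ t ∈ Icc (0 : ℝ) T \ jumpSet u T, ∀ v : X, E t (u t) ≤ E t v + Dmu μ (u t) v) ∧
    ∀ t ∈ Icc (0 : ℝ) T,
      varAug (veCost E μ) u T 0 t ≠ ⊤ ∧
        E t (u t) + (varAug (veCost E μ) u T 0 t).toReal =
          E 0 (u 0) + ∫ s in (0 : ℝ)..t, P s (u s)


/-- The conjugate `ψ*(s) = sup_{r ≥ 0} (s·r − ψ(r))` of a nonnegative dissipation potential,
extended to `ℝ≥0∞`. -/
def psiStar (ψ : ℝ → ℝ) (s : ℝ≥0∞) : ℝ≥0∞ :=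
  ⨆ (r : ℝ) (_ : 0 ≤ r), (s * ENNReal.ofReal r - ENNReal.ofReal (ψ r))

/-- The generalized Moreau–Yosida approximation `Y_τ^ψ(E)(t,u)`. -/
def MYosida {X : Type*} [MetricSpace X] (E : ℝ → X → ℝ) (ψ : ℝ → ℝ) (τ t : ℝ) (u : X) : ℝ :=
  sInf {v : ℝ | ∃ w : X, v = τ * ψ (dist u w / τ) + E t w}

private lemma psi_linear_lb (ψ : ℝ → ℝ) (hψnn : ∀ r : ℝ, 0 ≤ r → 0 ≤ ψ r)
    (hψsuper : Tendsto (fun r => ψ r / r) atTop atTop) (A : ℝ) :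
    ∃ B : ℝ, 0 ≤ B ∧ ∀ r : ℝ, 0 ≤ r → A * r - B ≤ ψ r := by
  obtain ⟨R, hR⟩ := eventually_atTop.1 (hψsuper.eventually (eventually_ge_atTop A))
  set R' := max R 1 with hR'
  refine ⟨|A| * R', by positivity, fun r hr => ?_⟩
  rcases le_or_gt r R' with h | h
  · have h1 : A * r ≤ |A| * R' := by
      calc A * r ≤ |A| * r := mul_le_mul_of_nonneg_right (le_abs_self A) hr
        _ ≤ |A| * R' := mul_le_mul_of_nonneg_left h (abs_nonneg A)
    have := hψnn r hr
    linarith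
  · have hrpos : (0:ℝ) < r := lt_of_lt_of_le (by norm_num) (le_of_lt (lt_of_le_of_lt (le_max_right R 1) h))
    have h2 : A ≤ ψ r / r := hR r (le_trans (le_max_left R 1) h.le)
    have h3 : A * r ≤ ψ r := by
      rw [← le_div_iff₀ hrpos]; exact h2
    nlinarith [abs_nonneg A, le_max_right R 1, abs_nonneg A]

private lemma lsc_bddBelow {α : Type*} [TopologicalSpace α] {K : Set α} {f : α → ℝ}
    (hK : IsCompact K) (hf : LowerSemicontinuousOn f K) : ∃ m : ℝ, ∀ p ∈ K, m ≤ f p := by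
  rcases K.eq_empty_or_nonempty with h | h
  · exact ⟨0, by simp [h]⟩
  have key : ∀ x : α, x ∈ K → ∃ U : Set α, U ∈ nhds x ∧ ∀ y ∈ U ∩ K, f x - 1 < f y := by
    intro x hx
    have h1 : ∀ᶠ y in nhdsWithin x K, f x - 1 < f y := hf x hx (f x - 1) (by linarith)
    rw [eventually_iff, mem_nhdsWithin] at h1
    obtain ⟨u, hu, hxu, hsub⟩ := h1
    exact ⟨u, hu.mem_nhds hxu, fun y hy => hsub hy⟩
  choose U hU hUf using key
  obtain ⟨tf, htf⟩ := hK.elim_nhds_subcover' U hU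
  have htfne : tf.Nonempty := by
    obtain ⟨x, hx⟩ := h
    obtain ⟨y, hy, -⟩ := mem_iUnion₂.1 (htf hx)
    exact ⟨y, hy⟩
  refine ⟨tf.inf' htfne (fun x => f x - 1), fun p hp => ?_⟩
  obtain ⟨y, hy, hpy⟩ := mem_iUnion₂.1 (htf hp)
  have h2 : f (y : α) - 1 < f p := hUf (y : α) y.2 p ⟨hpy, hp⟩
  exact le_trans (Finset.inf'_le _ hy) h2.le

private lemma limsup_mul_const_le' {α : Type*} {f : Filter α} {g : α → ℝ≥0∞} {c : ℝ≥0∞}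
    (hc0 : c ≠ 0) (hct : c ≠ ⊤) :
    (Filter.limsup g f) * c ≤ Filter.limsup (fun x => g x * c) f := by
  rw [Filter.limsup_eq, Filter.limsup_eq]
  refine le_sInf fun a ha => ?_
  have h1 : sInf {b | ∀ᶠ x in f, g x ≤ b} ≤ a / c := by
    refine sInf_le ?_
    filter_upwards [ha] with x hx
    exact (ENNReal.le_div_iff_mul_le (Or.inl hc0) (Or.inl hct)).2 hx
  calc sInf {b | ∀ᶠ x in f, g x ≤ b} * c ≤ (a / c) * c := mul_le_mul_left h1 c
    _ = a := ENNReal.div_mul_cancel hc0 hct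

private lemma limsup_add_const_le' {α : Type*} {f : Filter α} {g : α → ℝ≥0∞} {c : ℝ≥0∞} :
    Filter.limsup (fun x => g x + c) f ≤ Filter.limsup g f + c := by
  set a := Filter.limsup g f with ha
  rcases eq_or_ne a ⊤ with h | h
  · simp [h]
  refine ENNReal.le_of_forall_pos_le_add fun ε hε _ => ?_
  have h1 : Filter.limsup g f < a + ε := ENNReal.lt_add_right h (by exact_mod_cast hε.ne')
  have h2 : ∀ᶠ x in f, g x < a + ε := Filter.eventually_lt_of_limsup_lt h1
  have h3 : Filter.limsup (fun x => g x + c) f ≤ (a + ε) + c := by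
    refine Filter.limsup_le_of_le (by isBoundedDefault) ?_
    filter_upwards [h2] with x hx
    exact add_le_add hx.le le_rfl
  calc Filter.limsup (fun x => g x + c) f ≤ (a + ε) + c := h3
    _ = a + c + ε := by ring

private lemma ofReal_csSup_le {s : Set ℝ} (hne : s.Nonempty) :
    ENNReal.ofReal (sSup s) ≤ ⨆ a ∈ s, ENNReal.ofReal a := by
  refine ENNReal.le_of_forall_pos_le_add fun ε hε _ => ?_
  have hε' : (0:ℝ) < (ε : ℝ) := hε
  obtain ⟨a, ha, hlt⟩ := exists_lt_of_lt_csSup hne (show sSup s - (ε:ℝ) < sSup s by linarith)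
  calc ENNReal.ofReal (sSup s) ≤ ENNReal.ofReal (a + (ε:ℝ)) :=
        ENNReal.ofReal_le_ofReal (by linarith)
    _ ≤ ENNReal.ofReal a + ENNReal.ofReal (ε:ℝ) := ENNReal.ofReal_add_le
    _ ≤ (⨆ b ∈ s, ENNReal.ofReal b) + ε := by
        gcongr
        · exact le_biSup _ ha
        · simp


set_option maxHeartbeats 1000000 in
theorem statement14
    {X : Type*} [MetricSpace X] [CompleteSpace X]
    (T : ℝ) (hT : 0 < T) (E : ℝ → X → ℝ) (x₀ : X)
    (hE1 : CondE1 E T x₀)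
    (ψ : ℝ → ℝ) (hψconv : ConvexOn ℝ (Ici 0) ψ)
    (hψlsc : LowerSemicontinuousOn ψ (Ici 0))
    (hψ0 : ψ 0 = 0) (hψnn : ∀ r : ℝ, 0 ≤ r → 0 ≤ ψ r)
    (hψsuper : Tendsto (fun r => ψ r / r) atTop atTop)
    (t : ℝ) (ht : t ∈ Icc (0 : ℝ) T) (u : X) :
    Filter.limsup (fun τ => ENNReal.ofReal ((E t u - MYosida E ψ τ t u) / τ)) (𝓝[>] (0 : ℝ))
      = psiStar ψ (slopeE E t u) := by
  -- Step 0: a uniform lower bound for `E t · + dist x₀ ·`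
  obtain ⟨m, hm⟩ : ∃ m : ℝ, ∀ w : X, m ≤ E t w + dist x₀ w := by
    set C := E t u + dist x₀ u with hC
    obtain ⟨hlsc, hcpt⟩ := hE1 C
    have hlscF : LowerSemicontinuousOn (fun p : ℝ × X => E p.1 p.2 + dist x₀ p.2)
        {p : ℝ × X | p.1 ∈ Icc 0 T ∧ E p.1 p.2 + dist x₀ p.2 ≤ C} := by
      refine hlsc.add ?_
      exact (continuous_const.dist continuous_snd).lowerSemicontinuous.lowerSemicontinuousOn _
    obtain ⟨mK, hmK⟩ := lsc_bddBelow hcpt hlscF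
    refine ⟨min mK C, fun w => ?_⟩
    rcases le_or_gt (E t w + dist x₀ w) C with h | h
    · exact le_trans (min_le_left _ _) (hmK (t, w) ⟨ht, h⟩)
    · exact le_trans (min_le_right _ _) h.le
  -- Step 1: basic properties of the Moreau-Yosida approximation
  obtain ⟨B1, hB1nn, hB1⟩ := psi_linear_lb ψ hψnn hψsuper 1
  have hbdd : ∀ τ : ℝ, 0 < τ →
      BddBelow {v : ℝ | ∃ w : X, v = τ * ψ (dist u w / τ) + E t w} := by
    intro τ hτ
    refine ⟨m - dist x₀ u - τ * B1, ?_⟩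
    rintro v ⟨w, rfl⟩
    have h1 : 1 * (dist u w / τ) - B1 ≤ ψ (dist u w / τ) := hB1 _ (by positivity)
    have h2 : m ≤ E t w + dist x₀ w := hm w
    have h3 : dist x₀ w ≤ dist x₀ u + dist u w := dist_triangle _ _ _
    have h4 : τ * (dist u w / τ) = dist u w := by field_simp
    nlinarith [mul_le_mul_of_nonneg_left h1 hτ.le]
  have hne : ∀ τ : ℝ, {v : ℝ | ∃ w : X, v = τ * ψ (dist u w / τ) + E t w}.Nonempty :=
    fun τ => ⟨_, u, rfl⟩
  have hYle : ∀ τ : ℝ, 0 < τ → ∀ w : X,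
      MYosida E ψ τ t u ≤ τ * ψ (dist u w / τ) + E t w :=
    fun τ hτ w => csInf_le (hbdd τ hτ) ⟨w, rfl⟩
  have hYleu : ∀ τ : ℝ, 0 < τ → MYosida E ψ τ t u ≤ E t u := by
    intro τ hτ
    have := hYle τ hτ u
    simpa [hψ0] using this
  -- Direction A : psiStar ≤ limsup
  have hA : psiStar ψ (slopeE E t u) ≤
      Filter.limsup (fun τ => ENNReal.ofReal ((E t u - MYosida E ψ τ t u) / τ)) (𝓝[>] (0 : ℝ)) := by
    rw [psiStar]
    refine iSup₂_le fun r hr => ?_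
    rcases eq_or_lt_of_le hr with hr0 | hr0
    · simp [← hr0]
    by_cases hbot : 𝓝[≠] u = ⊥
    · have hs0 : slopeE E t u = 0 := by
        rw [slopeE, hbot, Filter.limsup_bot]; rfl
      rw [hs0, zero_mul]
      simp
    haveI : (𝓝[≠] u).NeBot := ⟨hbot⟩
    rw [tsub_le_iff_right]
    -- pointwise inequality along v → u
    have hptw : ∀ᶠ v in 𝓝[≠] u,
        ENNReal.ofReal ((E t u - E t v) / dist u v) * ENNReal.ofReal r ≤
          ENNReal.ofReal ((E t u - MYosida E ψ (dist u v / r) t u) / (dist u v / r))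
            + ENNReal.ofReal (ψ r) := by
      filter_upwards [self_mem_nhdsWithin] with v hv
      have hvne : v ≠ u := hv
      have hd : 0 < dist u v := dist_pos.2 (fun h => hvne h.symm)
      set τv := dist u v / r with hτvdef
      have hτv : 0 < τv := div_pos hd hr0
      have h1 : MYosida E ψ τv t u ≤ τv * ψ (dist u v / τv) + E t v := hYle τv hτv v
      have h2 : dist u v / τv = r := by
        rw [hτvdef]; field_simp
      rw [h2] at h1
      have h3 : ((E t u - E t v) / dist u v) * r ≤
          (E t u - MYosida E ψ τv t u) / τv + ψ r := by
        rw [← sub_le_iff_le_add, le_div_iff₀ hτv]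
        have hq : ((E t u - E t v) / dist u v) * r * τv = E t u - E t v := by
          rw [hτvdef]; field_simp
        have hexp : (((E t u - E t v) / dist u v) * r - ψ r) * τv
            = E t u - E t v - ψ r * τv := by rw [sub_mul, hq]
        rw [hexp]
        nlinarith [h1]
      by_cases hq0 : (E t u - E t v) / dist u v ≤ 0
      · rw [ENNReal.ofReal_eq_zero.2 hq0, zero_mul]
        exact zero_le
      push_neg at hq0
      calc ENNReal.ofReal ((E t u - E t v) / dist u v) * ENNReal.ofReal r
          = ENNReal.ofReal (((E t u - E t v) / dist u v) * r) :=
            (ENNReal.ofReal_mul hq0.le).symm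
        _ ≤ ENNReal.ofReal ((E t u - MYosida E ψ τv t u) / τv + ψ r) :=
            ENNReal.ofReal_le_ofReal h3
        _ ≤ _ := ENNReal.ofReal_add_le
    -- the map v ↦ dist u v / r tends to 0 within (0,∞)
    have hmap : Tendsto (fun v : X => dist u v / r) (𝓝[≠] u) (𝓝[>] (0 : ℝ)) := by
      rw [tendsto_nhdsWithin_iff]
      constructor
      · have h0 : Tendsto (fun v : X => dist u v) (𝓝 u) (𝓝 (dist u u)) :=
          (continuous_const.dist continuous_id).tendsto u
        rw [dist_self] at h0
        have h1 : Tendsto (fun v : X => dist u v) (𝓝[≠] u) (𝓝 0) :=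
          h0.mono_left nhdsWithin_le_nhds
        simpa using h1.div_const r
      · filter_upwards [self_mem_nhdsWithin] with v hv
        exact div_pos (dist_pos.2 fun h => hv h.symm) hr0
    rw [slopeE]
    calc Filter.limsup (fun v => ENNReal.ofReal ((E t u - E t v) / dist u v)) (𝓝[≠] u)
          * ENNReal.ofReal r
        ≤ Filter.limsup
            (fun v => ENNReal.ofReal ((E t u - E t v) / dist u v) * ENNReal.ofReal r)
            (𝓝[≠] u) :=
          limsup_mul_const_le' (ENNReal.ofReal_pos.2 hr0).ne' ENNReal.ofReal_ne_top
      _ ≤ Filter.limsup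
            (fun v => ENNReal.ofReal ((E t u - MYosida E ψ (dist u v / r) t u) / (dist u v / r))
              + ENNReal.ofReal (ψ r)) (𝓝[≠] u) :=
          Filter.limsup_le_limsup hptw
      _ ≤ Filter.limsup
            (fun v => ENNReal.ofReal ((E t u - MYosida E ψ (dist u v / r) t u) / (dist u v / r)))
            (𝓝[≠] u) + ENNReal.ofReal (ψ r) := limsup_add_const_le'
      _ ≤ Filter.limsup (fun τ => ENNReal.ofReal ((E t u - MYosida E ψ τ t u) / τ)) (𝓝[>] (0:ℝ))
            + ENNReal.ofReal (ψ r) := by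
          refine add_le_add ?_ le_rfl
          have heq : Filter.limsup
              (fun v => ENNReal.ofReal ((E t u - MYosida E ψ (dist u v / r) t u) / (dist u v / r)))
              (𝓝[≠] u)
              = Filter.limsup (fun τ => ENNReal.ofReal ((E t u - MYosida E ψ τ t u) / τ))
                  (Filter.map (fun v : X => dist u v / r) (𝓝[≠] u)) := by
            rw [Filter.limsup_eq, Filter.limsup_eq]
            simp only [Filter.eventually_map]
          rw [heq]
          exact Filter.limsup_le_limsup_of_le hmap
  -- Direction B : limsup ≤ psiStar
  have hB : Filter.limsup (fun τ => ENNReal.ofReal ((E t u - MYosida E ψ τ t u) / τ)) (𝓝[>] (0:ℝ))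
      ≤ psiStar ψ (slopeE E t u) := by
    rcases eq_or_ne (slopeE E t u) ⊤ with hSt | hSt
    · have htop : psiStar ψ (slopeE E t u) = ⊤ := by
        rw [hSt]
        refine top_unique ?_
        have h1 := le_iSup₂ (f := fun (ρ : ℝ) (_ : (0:ℝ) ≤ ρ) =>
          (⊤:ℝ≥0∞) * ENNReal.ofReal ρ - ENNReal.ofReal (ψ ρ)) 1 zero_le_one
        rw [show psiStar ψ ⊤ = ⨆ (ρ : ℝ) (_ : (0:ℝ) ≤ ρ),
          (⊤:ℝ≥0∞) * ENNReal.ofReal ρ - ENNReal.ofReal (ψ ρ) from rfl]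
        refine le_trans (le_of_eq ?_) h1
        rw [ENNReal.ofReal_one, mul_one, ENNReal.top_sub ENNReal.ofReal_ne_top]
      rw [htop]
      exact le_top
    set S₀ := (slopeE E t u).toReal with hS₀def
    have hS₀nn : 0 ≤ S₀ := ENNReal.toReal_nonneg
    have hSof : slopeE E t u = ENNReal.ofReal S₀ := (ENNReal.ofReal_toReal hSt).symm
    set Φ : ℝ → ℝ := fun s => sSup ((fun ρ => s * ρ - ψ ρ) '' Ici 0) with hΦdef
    have hΦbdd : ∀ s : ℝ, BddAbove ((fun ρ => s * ρ - ψ ρ) '' Ici 0) := by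
      intro s
      obtain ⟨B, hBnn, hB⟩ := psi_linear_lb ψ hψnn hψsuper (s + 1)
      refine ⟨B, ?_⟩
      rintro a ⟨ρ, hρ, rfl⟩
      have h1 := hB ρ hρ
      have hρ' : (0:ℝ) ≤ ρ := hρ
      show s * ρ - ψ ρ ≤ B
      nlinarith
    have hΦne : ∀ s : ℝ, ((fun ρ => s * ρ - ψ ρ) '' Ici 0).Nonempty :=
      fun s => ⟨_, mem_image_of_mem _ self_mem_Ici⟩
    have hΦle : ∀ s ρ : ℝ, 0 ≤ ρ → s * ρ - ψ ρ ≤ Φ s :=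
      fun s ρ hρ => le_csSup (hΦbdd s) (mem_image_of_mem _ hρ)
    have hΦ0 : ∀ s : ℝ, 0 ≤ Φ s := by
      intro s
      have := hΦle s 0 le_rfl
      simpa [hψ0] using this
    obtain ⟨BA, hBAnn, hBA⟩ := psi_linear_lb ψ hψnn hψsuper (S₀ + 2)
    have hΦinc : ∀ ε : ℝ, 0 < ε → ε ≤ 1 → Φ (S₀ + ε) ≤ Φ S₀ + ε * BA := by
      intro ε hε hε1
      refine csSup_le (hΦne _) ?_
      rintro a ⟨ρ, hρ, rfl⟩
      simp only
      rcases le_or_gt ρ BA with h | h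
      · have h1 := hΦle S₀ ρ hρ
        have h2 : ε * ρ ≤ ε * BA := mul_le_mul_of_nonneg_left h hε.le
        nlinarith
      · have h2 := hBA ρ hρ
        have h3 : (S₀ + ε) * ρ - ψ ρ = ((S₀ + 2) * ρ - ψ ρ) + (ε - 2) * ρ := by ring
        have h4 : (ε - 2) * ρ ≤ -1 * ρ := mul_le_mul_of_nonneg_right (by linarith) hρ
        have h5 := hΦ0 S₀
        have h6 := mul_nonneg hε.le hBAnn
        nlinarith
    have hslope : ∀ ε : ℝ, 0 < ε → ∃ δ : ℝ, 0 < δ ∧ ∀ v : X, v ≠ u → dist u v < δ →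
        (E t u - E t v) / dist u v ≤ S₀ + ε := by
      intro ε hε
      have hlt : Filter.limsup (fun v => ENNReal.ofReal ((E t u - E t v) / dist u v)) (𝓝[≠] u)
          < ENNReal.ofReal (S₀ + ε) := by
        rw [show Filter.limsup (fun v => ENNReal.ofReal ((E t u - E t v) / dist u v)) (𝓝[≠] u)
          = slopeE E t u from rfl, hSof]
        exact (ENNReal.ofReal_lt_ofReal_iff (by linarith)).2 (by linarith)
      have hev := Filter.eventually_lt_of_limsup_lt hlt
      rw [eventually_nhdsWithin_iff, Metric.eventually_nhds_iff] at hev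
      obtain ⟨δ, hδ, hball⟩ := hev
      refine ⟨δ, hδ, fun v hv hvd => ?_⟩
      have h1 := hball (show dist v u < δ by rwa [dist_comm]) (by simpa using hv)
      by_contra h
      push_neg at h
      exact absurd (ENNReal.ofReal_le_ofReal h.le) (not_le.2 h1)
    have hmain : ∀ ε : ℝ, 0 < ε → ε ≤ 1 →
        ∀ᶠ τ in 𝓝[>] (0:ℝ),
          ENNReal.ofReal ((E t u - MYosida E ψ τ t u) / τ)
            ≤ ENNReal.ofReal (Φ S₀ + ε * (BA + 1)) := by
      intro ε hε hε1
      obtain ⟨δ, hδ, hqb⟩ := hslope ε hε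
      set C₁ := E t u - m + dist x₀ u with hC₁def
      have hC₁nn : 0 ≤ C₁ := by have := hm u; rw [hC₁def]; linarith
      obtain ⟨B₂, hB₂nn, hB₂⟩ := psi_linear_lb ψ hψnn hψsuper (1 + 2 * (C₁ + 1) / δ)
      set τ₀ := min 1 (1 / (B₂ + 1)) with hτ₀def
      have hτ₀ : 0 < τ₀ := lt_min one_pos (by positivity)
      filter_upwards [Ioo_mem_nhdsGT_of_mem (left_mem_Ico.2 hτ₀)] with τ hτ
      have hτpos : 0 < τ := hτ.1
      have hlt2 : sInf {v : ℝ | ∃ w : X, v = τ * ψ (dist u w / τ) + E t w}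
          < MYosida E ψ τ t u + ε * τ := by
        have h0 : 0 < ε * τ := mul_pos hε hτpos
        rw [show sInf {v : ℝ | ∃ w : X, v = τ * ψ (dist u w / τ) + E t w}
          = MYosida E ψ τ t u from rfl]
        linarith
      obtain ⟨val, ⟨w, rfl⟩, hval⟩ := exists_lt_of_csInf_lt (hne τ) hlt2
      set d := dist u w with hddef
      have hdnn : 0 ≤ d := dist_nonneg
      set ρ := d / τ with hρdef
      have hρnn : 0 ≤ ρ := by positivity
      have hτρ : τ * ρ = d := by rw [hρdef]; field_simp
      have hY := hYleu τ hτpos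
      have h5 : τ * ψ ρ + E t w ≤ E t u + ε * τ := by linarith
      have h6 : m ≤ E t w + dist x₀ w := hm w
      have h7 : dist x₀ w ≤ dist x₀ u + d := dist_triangle x₀ u w
      have h8 : τ * ψ ρ ≤ C₁ + d + ε * τ := by rw [hC₁def]; linarith
      have h9 : (1 + 2 * (C₁ + 1) / δ) * ρ - B₂ ≤ ψ ρ := hB₂ ρ hρnn
      have h9' : τ * ((1 + 2 * (C₁ + 1) / δ) * ρ - B₂) ≤ τ * ψ ρ :=
        mul_le_mul_of_nonneg_left h9 hτpos.le
      have h9'' : τ * ((1 + 2 * (C₁ + 1) / δ) * ρ - B₂)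
          = (τ * ρ) + (2 * (C₁ + 1) / δ) * (τ * ρ) - B₂ * τ := by ring
      rw [hτρ] at h9''
      have h10 : (2 * (C₁ + 1) / δ) * d ≤ C₁ + (B₂ + ε) * τ := by linarith
      have hτle : τ ≤ 1 / (B₂ + 1) := le_of_lt (lt_of_lt_of_le hτ.2 (min_le_right _ _))
      have hBp : (0:ℝ) < B₂ + 1 := by linarith
      have h11 : (B₂ + ε) * τ ≤ 1 := by
        have h11a : (B₂ + 1) * τ ≤ (B₂ + 1) * (1 / (B₂ + 1)) :=
          mul_le_mul_of_nonneg_left hτle hBp.le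
        rw [mul_one_div, div_self hBp.ne'] at h11a
        nlinarith
      have h12 : d < δ := by
        have h12a : (2 * (C₁ + 1) / δ) * d ≤ C₁ + 1 := by linarith
        have h12b := mul_le_mul_of_nonneg_right h12a hδ.le
        have h12c : (2 * (C₁ + 1) / δ) * d * δ = 2 * (C₁ + 1) * d := by
          field_simp
        rw [h12c] at h12b
        nlinarith
      have hfinal : (E t u - MYosida E ψ τ t u) / τ ≤ Φ S₀ + ε * (BA + 1) := by
        have hΦnn := hΦ0 S₀
        have hεBA := mul_nonneg hε.le hBAnn
        rcases eq_or_lt_of_le hdnn with hd0 | hd0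
        · have hw : u = w := by
            apply dist_eq_zero.1
            rw [← hddef, ← hd0]
          have hρ0 : ρ = 0 := by rw [hρdef, ← hd0, zero_div]
          rw [hρ0, hψ0, ← hw] at hval
          rw [div_le_iff₀ hτpos]
          nlinarith
        · have hwu : w ≠ u := fun h => absurd (dist_pos.1 hd0) (by rw [h]; simp)
          have hq := hqb w hwu h12
          have hEE : E t u - E t w ≤ (S₀ + ε) * d := by
            rw [div_le_iff₀ hd0] at hq
            linarith
          have h13 : (S₀ + ε) * ρ - ψ ρ ≤ Φ S₀ + ε * BA :=
            le_trans (hΦle (S₀ + ε) ρ hρnn) (hΦinc ε hε hε1)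
          have h13' : τ * ((S₀ + ε) * ρ - ψ ρ) ≤ τ * (Φ S₀ + ε * BA) :=
            mul_le_mul_of_nonneg_left h13 hτpos.le
          have hexp : τ * ((S₀ + ε) * ρ - ψ ρ) = (S₀ + ε) * (τ * ρ) - τ * ψ ρ := by ring
          rw [hτρ] at hexp
          rw [div_le_iff₀ hτpos]
          nlinarith
      exact ENNReal.ofReal_le_ofReal hfinal
    have hlimB2 : Filter.limsup
        (fun τ => ENNReal.ofReal ((E t u - MYosida E ψ τ t u) / τ)) (𝓝[>] (0:ℝ))
        ≤ ENNReal.ofReal (Φ S₀) := by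
      refine ENNReal.le_of_forall_pos_le_add fun ν hν _ => ?_
      have hν' : (0:ℝ) < (ν:ℝ) := hν
      set ε := min 1 ((ν:ℝ) / (BA + 1)) with hεdef
      have hε : 0 < ε := lt_min one_pos (by positivity)
      have hε1 : ε ≤ 1 := min_le_left _ _
      have hstep := Filter.limsup_le_of_le (by isBoundedDefault) (hmain ε hε hε1)
      refine le_trans hstep ?_
      have h1 : ε * (BA + 1) ≤ (ν:ℝ) := by
        have h2 : ε ≤ (ν:ℝ) / (BA + 1) := min_le_right _ _
        have h3 : ε * (BA + 1) ≤ ((ν:ℝ) / (BA + 1)) * (BA + 1) :=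
          mul_le_mul_of_nonneg_right h2 (by linarith)
        rwa [div_mul_cancel₀ _ (by linarith : (BA:ℝ) + 1 ≠ 0)] at h3
      calc ENNReal.ofReal (Φ S₀ + ε * (BA + 1))
          ≤ ENNReal.ofReal (Φ S₀) + ENNReal.ofReal (ε * (BA + 1)) := ENNReal.ofReal_add_le
        _ ≤ ENNReal.ofReal (Φ S₀) + ν := by
            gcongr
            calc ENNReal.ofReal (ε * (BA + 1)) ≤ ENNReal.ofReal (ν:ℝ) :=
                  ENNReal.ofReal_le_ofReal h1
              _ = (ν : ℝ≥0∞) := ENNReal.ofReal_coe_nnreal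
    have hΦpsi : ENNReal.ofReal (Φ S₀) ≤ psiStar ψ (slopeE E t u) := by
      refine le_trans (ofReal_csSup_le (hΦne S₀)) ?_
      refine iSup₂_le fun a ha => ?_
      obtain ⟨ρ, hρ, rfl⟩ := ha
      have heq : ENNReal.ofReal (S₀ * ρ - ψ ρ)
          = slopeE E t u * ENNReal.ofReal ρ - ENNReal.ofReal (ψ ρ) := by
        rw [ENNReal.ofReal_sub _ (hψnn ρ hρ), ENNReal.ofReal_mul hS₀nn, ← hSof]
      rw [heq]
      exact le_iSup₂ (f := fun (ρ : ℝ) (_ : (0:ℝ) ≤ ρ) =>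
        slopeE E t u * ENNReal.ofReal ρ - ENNReal.ofReal (ψ ρ)) ρ hρ
    exact le_trans hlimB2 hΦpsi
  exact le_antisymm hB hA




end
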